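/- Let I = (G,q,π) be an instance of Unique Label Cover with q ≥ 2 such that φ_G ≥ φ for some φ > 0 and OPT(I) ≤ 1 − ρ for some 0 < ρ ≤ 1, and let G' be its label-extended graph. Then every nonempty subset S' of the vertex set of G' with μ_{G'}(S') ≤ μ_{G'}/q satisfies φ_{G'}(S') ≥ ρφ/(6q); that is, φ_{G'}(q) ≥ ρφ/(6q). -/

import Mathlib

open scoped Classical
open Matrix

noncomputable section

namespace Sublinear

variable {V : Type*}

/-- The degree `d(v)` of a vertex, as a real number. -/
def deg [Fintype V] (G : SimpleGraph V) (v : V) : ℝ :=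
  ((Finset.univ.filter fun u => G.Adj v u).card : ℝ)

/-- The volume `μ_G(S)` of a set of vertices. -/
def vol [Fintype V] (G : SimpleGraph V) (S : Set V) : ℝ :=
  ∑ v ∈ Finset.univ.filter (fun v => v ∈ S), deg G v

/-- The number of ordered adjacent pairs `(u,v)` with `u ∈ S`, `v ∈ T`.
For disjoint `S`, `T` this equals the number `e_G(S,T)` of edges between `S` and `T`. -/
def eB [Fintype V] (G : SimpleGraph V) (S T : Set V) : ℝ :=
  (((Finset.univ : Finset (V × V)).filter
      fun p => p.1 ∈ S ∧ p.2 ∈ T ∧ G.Adj p.1 p.2).card : ℝ)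

/-- The number `e_G(S)` of edges with both endpoints in `S`. -/
def eIn [Fintype V] (G : SimpleGraph V) (S : Set V) : ℝ := eB G S S / 2

/-- The conductance `φ_G(S)` of a set of vertices. -/
def cond [Fintype V] (G : SimpleGraph V) (S : Set V) : ℝ :=
  eB G S Sᶜ / vol G S

/-- The conductance `φ_G` of the graph: the minimum of `φ_G(S)` over nonempty `S`
with `μ_G(S) ≤ μ_G/2`. -/
def conductance [Fintype V] (G : SimpleGraph V) : ℝ :=
  sInf {x | ∃ S : Set V, S.Nonempty ∧ vol G S ≤ vol G Set.univ / 2 ∧ x = cond G S}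

/-- The label-extended graph `G'` of a Unique Label Cover instance `I = (G, q, π)`
(with labels `Fin q`): vertices are pairs `(u,i)`, and `(u,i)` is adjacent to
`(v,j)` iff `{u,v}` is an edge of `G` and `j = π u v i`. -/
def ulcExt {V : Type*} (G : SimpleGraph V) {q : ℕ} (π : V → V → Equiv.Perm (Fin q))
    (hπ : ∀ u v, G.Adj u v → π v u = (π u v)⁻¹) : SimpleGraph (V × Fin q) where
  Adj p p' := G.Adj p.1 p'.1 ∧ p'.2 = π p.1 p'.1 p.2
  symm := by
    constructor
    rintro ⟨u, i⟩ ⟨v, j⟩ ⟨hadj, hj⟩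
    refine ⟨hadj.symm, ?_⟩
    simp only at hj ⊢
    rw [hπ u v hadj, hj]
    simp
  loopless := by
    constructor
    rintro ⟨u, i⟩ ⟨hadj, _⟩
    exact G.loopless.irrefl u hadj

/-- The fraction of the edges of `G` that are satisfied by the assignment `ψ`
in the Unique Label Cover instance `(G, q, π)`: an edge `{u,v}` is satisfied
if `ψ v = π u v (ψ u)`. -/
def ulcSatFrac [Fintype V] (G : SimpleGraph V) {q : ℕ}
    (π : V → V → Equiv.Perm (Fin q)) (ψ : V → Fin q) : ℝ :=
  (((Finset.univ : Finset (V × V)).filter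
      fun p => G.Adj p.1 p.2 ∧ ψ p.2 = π p.1 p.2 (ψ p.1)).card : ℝ)
    / eB G Set.univ Set.univ


section Helpers

variable [Fintype V] (G : SimpleGraph V)

lemma deg_nonneg (v : V) : 0 ≤ deg G v := Nat.cast_nonneg _

lemma vol_nonneg (A : Set V) : 0 ≤ vol G A :=
  Finset.sum_nonneg fun v _ => deg_nonneg G v

lemma eB_nonneg (A B : Set V) : 0 ≤ eB G A B := Nat.cast_nonneg _

lemma vol_eq_sum_ite (A : Set V) :
    vol G A = ∑ u, if u ∈ A then deg G u else 0 := by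
  rw [vol, Finset.sum_filter]

lemma vol_univ_eq : vol G Set.univ = ∑ u, deg G u := by
  rw [vol_eq_sum_ite]; simp

lemma deg_eq_sum (u : V) : deg G u = ∑ v, if G.Adj u v then (1:ℝ) else 0 := by
  rw [deg, Finset.card_filter]; push_cast; rfl

lemma eB_eq_sum (A B : Set V) :
    eB G A B = ∑ u, ∑ v, if u ∈ A ∧ v ∈ B ∧ G.Adj u v then (1:ℝ) else 0 := by
  rw [eB, Finset.card_filter]; push_cast
  rw [Fintype.sum_prod_type]

lemma eB_symm (A B : Set V) : eB G A B = eB G B A := by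
  rw [eB, eB]
  norm_cast
  apply Finset.card_bij' (fun p _ => p.swap) (fun p _ => p.swap) <;>
    simp [SimpleGraph.adj_comm, and_comm] <;> tauto

lemma eB_univ_left (A : Set V) : eB G A Set.univ = vol G A := by
  rw [eB_eq_sum, vol_eq_sum_ite]
  refine Finset.sum_congr rfl fun u _ => ?_
  by_cases hu : u ∈ A
  · simp [hu, deg_eq_sum]
  · simp [hu]

lemma eB_le_vol (A B : Set V) : eB G A B ≤ vol G A := by
  rw [eB_eq_sum, vol_eq_sum_ite]
  refine Finset.sum_le_sum fun u _ => ?_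
  by_cases hu : u ∈ A
  · simp only [hu, true_and, deg_eq_sum]
    refine Finset.sum_le_sum fun v _ => ?_
    split_ifs <;> simp_all
  · refine le_trans (Finset.sum_nonpos fun v _ => ?_) (by simp [hu])
    split_ifs with h <;> simp_all

lemma vol_add_vol_compl (A : Set V) :
    vol G A + vol G Aᶜ = vol G Set.univ := by
  rw [vol_eq_sum_ite, vol_eq_sum_ite, vol_univ_eq, ← Finset.sum_add_distrib]
  refine Finset.sum_congr rfl fun u _ => ?_
  by_cases hu : u ∈ A <;> simp [hu]

lemma vol_pos (hdeg : ∀ v, 1 ≤ deg G v) {A : Set V} (hA : A.Nonempty) :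
    0 < vol G A := by
  obtain ⟨a, ha⟩ := hA
  have h1 : (1:ℝ) ≤ vol G A := by
    rw [vol]
    refine le_trans (hdeg a) (Finset.single_le_sum (fun v _ => deg_nonneg G v) ?_)
    simp [ha]
  linarith

lemma conductance_le (hdeg : ∀ v, 1 ≤ deg G v) {A : Set V} (hA : A.Nonempty)
    (hvol : vol G A ≤ vol G Set.univ / 2) : conductance G ≤ cond G A := by
  apply csInf_le
  · refine ⟨0, fun x hx => ?_⟩
    obtain ⟨S, _, _, rfl⟩ := hx
    exact div_nonneg (eB_nonneg G _ _) (vol_nonneg G _)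
  · exact ⟨A, hA, hvol, rfl⟩

lemma expansion_bound (hdeg : ∀ v, 1 ≤ deg G v) {φ : ℝ} (hφ : φ ≤ conductance G)
    {A : Set V} (hA : A.Nonempty) (hvol : vol G A ≤ vol G Set.univ / 2) :
    φ * vol G A ≤ eB G A Aᶜ := by
  have h1 : φ ≤ cond G A := le_trans hφ (conductance_le G hdeg hA hvol)
  have h2 : 0 < vol G A := vol_pos G hdeg hA
  rw [cond] at h1
  calc φ * vol G A ≤ (eB G A Aᶜ / vol G A) * vol G A := by nlinarith
    _ = eB G A Aᶜ := by field_simp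

end Helpers

section Ext

variable [Fintype V] (G : SimpleGraph V) {q : ℕ} (π : V → V → Equiv.Perm (Fin q))
  (hπ : ∀ u v, G.Adj u v → π v u = (π u v)⁻¹)

/-- number of labels of `u` in `S'` -/
def sfun {q : ℕ} (S' : Set (V × Fin q)) (u : V) : ℕ :=
  (Finset.univ.filter fun i : Fin q => (u, i) ∈ S').card

/-- number of labels of `u` in `S'` whose image under `π u v` is not in `S'` -/
def cfun {q : ℕ} (π : V → V → Equiv.Perm (Fin q)) (S' : Set (V × Fin q)) (u v : V) : ℕ :=
  (Finset.univ.filter fun i : Fin q => (u, i) ∈ S' ∧ (v, π u v i) ∉ S').card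

lemma sfun_le (S' : Set (V × Fin q)) (u : V) : sfun S' u ≤ q := by
  rw [sfun]; exact (Finset.card_filter_le _ _).trans (by simp)

lemma deg_ulcExt (p : V × Fin q) : deg (ulcExt G π hπ) p = deg G p.1 := by
  obtain ⟨u, i⟩ := p
  rw [deg, deg]
  norm_cast
  apply Finset.card_bij' (fun (p' : V × Fin q) _ => p'.1) (fun v _ => (v, π u v i))
  · intro p' hp'
    simp only [Finset.mem_filter, Finset.mem_univ, true_and] at hp' ⊢
    exact hp'.1
  · intro v hv
    simp only [Finset.mem_filter, Finset.mem_univ, true_and] at hv ⊢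
    exact ⟨hv, rfl⟩
  · intro p' hp'
    simp only [Finset.mem_filter, Finset.mem_univ, true_and] at hp'
    exact Prod.ext rfl hp'.2.symm
  · intro v _; rfl

lemma vol_ulcExt (S' : Set (V × Fin q)) :
    vol (ulcExt G π hπ) S' = ∑ u, deg G u * (sfun S' u : ℝ) := by
  rw [vol_eq_sum_ite, Fintype.sum_prod_type]
  refine Finset.sum_congr rfl fun u _ => ?_
  have : ∀ i : Fin q, (if (u, i) ∈ S' then deg (ulcExt G π hπ) (u, i) else 0)
      = (if (u, i) ∈ S' then deg G u else 0) := by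
    intro i; rw [deg_ulcExt]
  rw [Finset.sum_congr rfl fun i _ => this i, ← Finset.sum_filter,
    Finset.sum_const, nsmul_eq_mul, mul_comm]
  rfl

lemma vol_ulcExt_univ :
    vol (ulcExt G π hπ) Set.univ = q * vol G Set.univ := by
  rw [vol_ulcExt, vol_univ_eq, Finset.mul_sum]
  refine Finset.sum_congr rfl fun u _ => ?_
  have : sfun (Set.univ : Set (V × Fin q)) u = q := by simp [sfun]
  rw [this]; ring

lemma eB_ulcExt_cut (S' : Set (V × Fin q)) :
    eB (ulcExt G π hπ) S' S'ᶜ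
      = ∑ u, ∑ v, if G.Adj u v then (cfun π S' u v : ℝ) else 0 := by
  rw [eB, Finset.card_filter]
  push_cast
  rw [Fintype.sum_prod_type]
  have step1 : ∀ a : V × Fin q,
      (∑ b : V × Fin q, if (a ∈ S' ∧ b ∈ S'ᶜ ∧ (ulcExt G π hπ).Adj a b) then (1:ℝ) else 0)
      = ∑ v : V, if (a ∈ S' ∧ (v, π a.1 v a.2) ∉ S' ∧ G.Adj a.1 v) then (1:ℝ) else 0 := by
    intro a
    rw [Fintype.sum_prod_type]
    refine Finset.sum_congr rfl fun v _ => ?_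
    have hpt : ∀ j : Fin q,
        (if (a ∈ S' ∧ ((v, j) : V × Fin q) ∈ S'ᶜ ∧ (ulcExt G π hπ).Adj a (v, j)) then (1:ℝ) else 0)
        = (if j = π a.1 v a.2 then
            (if (a ∈ S' ∧ (v, π a.1 v a.2) ∉ S' ∧ G.Adj a.1 v) then (1:ℝ) else 0) else 0) := by
      intro j
      by_cases hj : j = π a.1 v a.2
      · subst hj
        simp only [ulcExt, Set.mem_compl_iff, and_true]
        split_ifs <;> tauto
      · simp only [ulcExt]
        simp [hj]
    rw [Finset.sum_congr rfl fun j _ => hpt j, Finset.sum_ite_eq' Finset.univ (π a.1 v a.2)]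
    simp
  rw [Finset.sum_congr rfl fun a _ => step1 a, Fintype.sum_prod_type]
  refine Finset.sum_congr rfl fun u _ => ?_
  rw [Finset.sum_comm]
  refine Finset.sum_congr rfl fun v _ => ?_
  by_cases hadj : G.Adj u v
  · rw [if_pos hadj, cfun, Finset.card_filter]
    push_cast
    refine Finset.sum_congr rfl fun i _ => ?_
    simp [hadj]
  · rw [if_neg hadj]
    refine Finset.sum_eq_zero fun i _ => ?_
    rw [if_neg (by tauto)]

/-- canonical label choice -/
def psiOf {q : ℕ} (S' : Set (V × Fin q)) (hq : 0 < q) (u : V) : Fin q :=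
  if h : (Finset.univ.filter fun i : Fin q => (u, i) ∈ S').Nonempty
  then (Finset.univ.filter fun i : Fin q => (u, i) ∈ S').min' h
  else ⟨0, hq⟩

lemma psiOf_spec {q : ℕ} (S' : Set (V × Fin q)) (hq : 0 < q) (u : V)
    (hu : sfun S' u = 1) (i : Fin q) : (u, i) ∈ S' ↔ i = psiOf S' hq u := by
  obtain ⟨a, ha⟩ := Finset.card_eq_one.mp hu
  have hne' : (Finset.univ.filter fun i : Fin q => (u, i) ∈ S').Nonempty := by
    rw [ha]; exact ⟨a, Finset.mem_singleton_self a⟩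
  have hmem : psiOf S' hq u ∈ (Finset.univ.filter fun i : Fin q => (u, i) ∈ S') := by
    simp only [psiOf]
    rw [dif_pos hne']
    exact Finset.min'_mem _ _
  have hψa : psiOf S' hq u = a := by
    rw [ha, Finset.mem_singleton] at hmem
    exact hmem
  rw [hψa]
  constructor
  · intro hi
    have : i ∈ Finset.univ.filter fun i : Fin q => (u, i) ∈ S' := by simp [hi]
    rw [ha, Finset.mem_singleton] at this
    exact this
  · intro hi
    rw [hi]
    have : a ∈ Finset.univ.filter fun i : Fin q => (u, i) ∈ S' := by
      rw [ha]; exact Finset.mem_singleton_self a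
    simpa using this

end Ext

set_option maxHeartbeats 2000000 in
/-- If `I = (G,q,π)` is a Unique Label Cover instance with `q ≥ 2`,
`φ_G ≥ φ > 0` and `OPT(I) ≤ 1 - ρ` for some `0 < ρ ≤ 1`, then every nonempty set
`S'` of vertices of the label-extended graph `G'` with `μ_{G'}(S') ≤ μ_{G'}/q`
has conductance at least `ρφ/(6q)`; that is, `φ_{G'}(q) ≥ ρφ/(6q)`. -/
theorem ulc_soundness_small_set_expansion
    {V : Type*} [Fintype V] (G : SimpleGraph V)
    (hdeg : ∀ v, 1 ≤ deg G v)
    (q : ℕ) (hq : 2 ≤ q)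
    (π : V → V → Equiv.Perm (Fin q))
    (hπ : ∀ u v, G.Adj u v → π v u = (π u v)⁻¹)
    (φ ρ : ℝ) (hφ : 0 < φ) (hcond : φ ≤ conductance G)
    (hρ0 : 0 < ρ) (hρ1 : ρ ≤ 1)
    (hopt : ∀ ψ : V → Fin q, ulcSatFrac G π ψ ≤ 1 - ρ) :
    ∀ S' : Set (V × Fin q), S'.Nonempty →
      vol (ulcExt G π hπ) S' ≤ vol (ulcExt G π hπ) Set.univ / q →
      ρ * φ / (6 * q) ≤ cond (ulcExt G π hπ) S' := by
  intro S' hne hvol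
  obtain ⟨⟨u0, i0⟩, hu0⟩ := hne
  have hq0 : (0:ℝ) < q := by positivity
  have hq2 : (2:ℝ) ≤ q := by exact_mod_cast hq
  -- basic quantities
  set μ := vol G Set.univ with hμdef
  set W := vol (ulcExt G π hπ) S' with hWdef
  set C := eB (ulcExt G π hπ) S' S'ᶜ with hCdef
  set T : Set V := {u | 1 ≤ sfun S' u} with hTdef
  set T1 : Set V := {u | sfun S' u = 1} with hT1def
  set A2 : Set V := {u | 2 ≤ sfun S' u} with hA2def
  have hμpos : 0 < μ := vol_pos G hdeg ⟨u0, Set.mem_univ u0⟩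
  have hdeg' : ∀ p : V × Fin q, 1 ≤ deg (ulcExt G π hπ) p := fun p => by
    rw [deg_ulcExt]; exact hdeg p.1
  have hWpos : 0 < W := vol_pos _ hdeg' ⟨(u0, i0), hu0⟩
  have hWeq : W = ∑ u, deg G u * (sfun S' u : ℝ) := vol_ulcExt G π hπ S'
  have hCeq : C = ∑ u, ∑ v, if G.Adj u v then (cfun π S' u v : ℝ) else 0 :=
    eB_ulcExt_cut G π hπ S'
  have hCnn : 0 ≤ C := eB_nonneg _ _ _
  have hWle : W ≤ μ := by
    rw [vol_ulcExt_univ G π hπ] at hvol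
    calc W ≤ q * μ / q := hvol
      _ = μ := by field_simp
  -- volume comparisons
  have f1 : vol G T ≤ W := by
    rw [hWeq, vol_eq_sum_ite]
    refine Finset.sum_le_sum fun u _ => ?_
    by_cases hu : u ∈ T
    · rw [if_pos hu]
      have h1 : (1:ℝ) ≤ (sfun S' u : ℝ) := by
        exact_mod_cast (by simpa [hTdef] using hu : 1 ≤ sfun S' u)
      nlinarith [deg_nonneg G u]
    · rw [if_neg hu]
      exact mul_nonneg (deg_nonneg G u) (Nat.cast_nonneg _)
  have f2 : W ≤ q * vol G T := by
    rw [hWeq, vol_eq_sum_ite, Finset.mul_sum]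
    refine Finset.sum_le_sum fun u _ => ?_
    by_cases hu : u ∈ T
    · rw [if_pos hu]
      have h1 : (sfun S' u : ℝ) ≤ q := by exact_mod_cast sfun_le S' u
      nlinarith [deg_nonneg G u]
    · rw [if_neg hu]
      have h0 : sfun S' u = 0 := by
        by_contra h
        exact hu (by simp [hTdef]; omega)
      simp [h0]
  have f3 : vol G T + vol G A2 ≤ W := by
    rw [hWeq, vol_eq_sum_ite, vol_eq_sum_ite, ← Finset.sum_add_distrib]
    refine Finset.sum_le_sum fun u _ => ?_
    have hd := deg_nonneg G u
    by_cases h1 : u ∈ T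
    · by_cases h2 : u ∈ A2
      · rw [if_pos h1, if_pos h2]
        have : (2:ℝ) ≤ (sfun S' u : ℝ) := by
          exact_mod_cast (by simpa [hA2def] using h2 : 2 ≤ sfun S' u)
        nlinarith
      · rw [if_pos h1, if_neg h2]
        have : (1:ℝ) ≤ (sfun S' u : ℝ) := by
          exact_mod_cast (by simpa [hTdef] using h1 : 1 ≤ sfun S' u)
        nlinarith
    · by_cases h2 : u ∈ A2
      · have h2' : 2 ≤ sfun S' u := by simpa [hA2def] using h2
        exact absurd (show u ∈ T by simp only [hTdef, Set.mem_setOf_eq]; omega) h1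
      · rw [if_neg h1, if_neg h2]
        have := mul_nonneg (deg_nonneg G u) (Nat.cast_nonneg (sfun S' u) (α := ℝ))
        linarith
  have f4 : vol G T1 + vol G A2 = vol G T := by
    rw [vol_eq_sum_ite, vol_eq_sum_ite, vol_eq_sum_ite, ← Finset.sum_add_distrib]
    refine Finset.sum_congr rfl fun u _ => ?_
    simp only [hT1def, hA2def, hTdef, Set.mem_setOf_eq]
    by_cases h1 : sfun S' u = 1 <;> by_cases h2 : 2 ≤ sfun S' u
    · exact absurd h2 (by omega)
    · rw [if_pos h1, if_neg h2, if_pos (by omega : 1 ≤ sfun S' u)]; ring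
    · rw [if_neg h1, if_pos h2, if_pos (by omega : 1 ≤ sfun S' u)]; ring
    · rw [if_neg h1, if_neg h2, if_neg (by omega : ¬ 1 ≤ sfun S' u)]; ring
  have f6 : T.Nonempty := by
    refine ⟨u0, ?_⟩
    simp only [hTdef, Set.mem_setOf_eq, sfun]
    rw [Nat.succ_le_iff, Finset.card_pos]
    exact ⟨i0, by simp [hu0]⟩
  -- cut bound from T
  have f5 : eB G T Tᶜ ≤ C := by
    rw [hCeq, eB_eq_sum]
    refine Finset.sum_le_sum fun u _ => Finset.sum_le_sum fun v _ => ?_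
    by_cases hc : u ∈ T ∧ v ∈ Tᶜ ∧ G.Adj u v
    · obtain ⟨hu, hv, hadj⟩ := hc
      rw [if_pos ⟨hu, hv, hadj⟩, if_pos hadj]
      have hsv : sfun S' v = 0 := by
        have : ¬ 1 ≤ sfun S' v := by simpa [hTdef] using hv
        omega
      have hvnot : ∀ j : Fin q, (v, j) ∉ S' := by
        intro j hj
        have : j ∈ Finset.univ.filter fun i : Fin q => (v, i) ∈ S' := by simp [hj]
        rw [sfun, Finset.card_eq_zero] at hsv
        simp [hsv] at this
      have hsu : 1 ≤ sfun S' u := by simpa [hTdef] using hu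
      rw [sfun, Nat.succ_le_iff, Finset.card_pos] at hsu
      obtain ⟨i, hi⟩ := hsu
      simp only [Finset.mem_filter, Finset.mem_univ, true_and] at hi
      have : 1 ≤ cfun π S' u v := by
        rw [cfun, Nat.succ_le_iff, Finset.card_pos]
        exact ⟨i, by simp [hi, hvnot]⟩
      exact_mod_cast this
    · rw [if_neg hc]
      split_ifs <;> positivity
  -- φ ≤ 1
  have hφ1 : φ ≤ 1 := by
    obtain ⟨v₀, -, hvmin⟩ := Finset.exists_min_image Finset.univ (deg G)
      ⟨u0, Finset.mem_univ u0⟩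
    have hw : ∃ w : V, w ≠ v₀ := by
      by_contra h
      push_neg at h
      have hz : deg G v₀ = 0 := by
        rw [deg]
        norm_cast
        rw [Finset.card_eq_zero, Finset.filter_eq_empty_iff]
        intro u _
        rw [h u]
        exact G.loopless.irrefl v₀
      linarith [hdeg v₀]
    obtain ⟨w, hwv⟩ := hw
    have hvolv : vol G {v₀} = deg G v₀ := by
      rw [vol_eq_sum_ite]
      have : ∀ u : V, (if u ∈ ({v₀} : Set V) then deg G u else 0)
          = if u = v₀ then deg G u else 0 := fun u => by simp [Set.mem_singleton_iff]
      simp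
    have hsum : deg G v₀ + deg G w ≤ μ := by
      rw [hμdef, vol_univ_eq]
      have hsub := Finset.sum_le_sum_of_subset_of_nonneg
        (Finset.subset_univ ({v₀, w} : Finset V)) (fun i _ _ => deg_nonneg G i)
      rwa [Finset.sum_pair (Ne.symm hwv)] at hsub
    have hv2 : vol G {v₀} ≤ μ / 2 := by
      rw [hvolv]
      have := hvmin w (Finset.mem_univ w)
      linarith
    have h1 : conductance G ≤ cond G {v₀} :=
      conductance_le G hdeg ⟨v₀, rfl⟩ hv2
    have h2 : cond G {v₀} ≤ 1 := by
      have hpos := vol_pos G hdeg (Set.singleton_nonempty v₀)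
      rw [cond, div_le_one hpos]
      exact eB_le_vol G _ _
    linarith
  -- the assignment and unsat count
  have hqpos : 0 < q := by omega
  obtain ⟨ψ, hψmem⟩ : ∃ ψ : V → Fin q,
      ∀ u, sfun S' u = 1 → ∀ i : Fin q, ((u, i) ∈ S' ↔ i = ψ u) :=
    ⟨psiOf S' hqpos, fun u hu i => psiOf_spec S' hqpos u hu i⟩
  obtain ⟨Nuns, hNdef⟩ : ∃ N : ℝ,
      N = ∑ u, ∑ v, if (G.Adj u v ∧ ¬ ψ v = π u v (ψ u)) then (1:ℝ) else 0 :=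
    ⟨_, rfl⟩
  have f7 : ρ * μ ≤ Nuns := by
    have hsat := hopt ψ
    rw [ulcSatFrac, eB_univ_left, ← hμdef] at hsat
    set Nsat : ℝ := (((Finset.univ : Finset (V × V)).filter
      fun p => G.Adj p.1 p.2 ∧ ψ p.2 = π p.1 p.2 (ψ p.1)).card : ℝ) with hNsdef
    have hpart : Nsat + Nuns = μ := by
      rw [hNsdef, hNdef, Finset.card_filter]
      push_cast
      rw [Fintype.sum_prod_type, ← Finset.sum_add_distrib, hμdef, vol_univ_eq]
      refine Finset.sum_congr rfl fun u _ => ?_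
      rw [← Finset.sum_add_distrib, deg_eq_sum]
      refine Finset.sum_congr rfl fun v _ => ?_
      by_cases hadj : G.Adj u v <;> by_cases hs : ψ v = π u v (ψ u) <;>
        simp [hadj, hs]
    rw [div_le_iff₀ hμpos] at hsat
    nlinarith
  -- unsat bound
  have f8 : Nuns ≤ C + 2 * vol G T1ᶜ := by
    have hX1 : vol G T1ᶜ = ∑ u, ∑ v, if (¬ u ∈ T1 ∧ G.Adj u v) then (1:ℝ) else 0 := by
      rw [vol_eq_sum_ite]
      refine Finset.sum_congr rfl fun u _ => ?_
      by_cases hu : u ∈ T1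
      · simp [hu]
      · simp only [Set.mem_compl_iff, hu, not_false_iff, if_true, if_pos, true_and,
          deg_eq_sum]
    have hX2 : vol G T1ᶜ = ∑ u, ∑ v, if (¬ v ∈ T1 ∧ G.Adj u v) then (1:ℝ) else 0 := by
      rw [Finset.sum_comm, hX1]
      refine Finset.sum_congr rfl fun u _ => Finset.sum_congr rfl fun v _ => ?_
      rw [SimpleGraph.adj_comm]
    have hcomb : ∀ u v : V,
        (if (G.Adj u v ∧ ¬ ψ v = π u v (ψ u)) then (1:ℝ) else 0)
        ≤ (if G.Adj u v then (cfun π S' u v : ℝ) else 0)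
          + ((if (¬ u ∈ T1 ∧ G.Adj u v) then (1:ℝ) else 0)
            + (if (¬ v ∈ T1 ∧ G.Adj u v) then (1:ℝ) else 0)) := by
      intro u v
      by_cases hadj : G.Adj u v
      · by_cases hu : u ∈ T1
        · by_cases hv : v ∈ T1
          · by_cases huns : ψ v = π u v (ψ u)
            · rw [if_neg (by tauto)]
              have : (0:ℝ) ≤ (cfun π S' u v : ℝ) := by positivity
              split_ifs <;> linarith
            · rw [if_pos ⟨hadj, huns⟩, if_pos hadj, if_neg (by tauto), if_neg (by tauto)]
              have hsu : sfun S' u = 1 := by simpa [hT1def] using hu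
              have hsv : sfun S' v = 1 := by simpa [hT1def] using hv
              have hmem : (u, ψ u) ∈ S' := (hψmem u hsu (ψ u)).mpr rfl
              have hnot : (v, π u v (ψ u)) ∉ S' := by
                intro hcontra
                exact huns ((hψmem v hsv _).mp hcontra).symm
              have : 1 ≤ cfun π S' u v := by
                rw [cfun, Nat.succ_le_iff, Finset.card_pos]
                exact ⟨ψ u, by simp [hmem, hnot]⟩
              have : (1:ℝ) ≤ (cfun π S' u v : ℝ) := by exact_mod_cast this
              linarith
          · rw [if_pos (by tauto : ¬ v ∈ T1 ∧ G.Adj u v)]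
            have h1 : (0:ℝ) ≤ (if G.Adj u v then (cfun π S' u v : ℝ) else 0) := by
              split_ifs <;> positivity
            split_ifs <;> linarith
        · rw [if_pos (by tauto : ¬ u ∈ T1 ∧ G.Adj u v)]
          have h1 : (0:ℝ) ≤ (if G.Adj u v then (cfun π S' u v : ℝ) else 0) := by
            split_ifs <;> positivity
          split_ifs <;> linarith
      · rw [if_neg (by tauto), if_neg hadj, if_neg (by tauto), if_neg (by tauto)]
        linarith
    calc Nuns ≤ ∑ u, ∑ v, ((if G.Adj u v then (cfun π S' u v : ℝ) else 0)
          + ((if (¬ u ∈ T1 ∧ G.Adj u v) then (1:ℝ) else 0)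
            + (if (¬ v ∈ T1 ∧ G.Adj u v) then (1:ℝ) else 0))) := by
          rw [hNdef]
          exact Finset.sum_le_sum fun u _ => Finset.sum_le_sum fun v _ => hcomb u v
      _ = (∑ u, ∑ v, if G.Adj u v then (cfun π S' u v : ℝ) else 0)
          + ((∑ u, ∑ v, if (¬ u ∈ T1 ∧ G.Adj u v) then (1:ℝ) else 0)
            + (∑ u, ∑ v, if (¬ v ∈ T1 ∧ G.Adj u v) then (1:ℝ) else 0)) := by
        rw [← Finset.sum_add_distrib, ← Finset.sum_add_distrib]
        refine Finset.sum_congr rfl fun u _ => ?_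
        rw [← Finset.sum_add_distrib, ← Finset.sum_add_distrib]
      _ = C + (vol G T1ᶜ + vol G T1ᶜ) := by rw [← hCeq, ← hX1, ← hX2]
      _ ≤ C + 2 * vol G T1ᶜ := by linarith
  -- partition volumes
  have hTT : vol G T + vol G Tᶜ = μ := vol_add_vol_compl G T
  have hT1T1 : vol G T1 + vol G T1ᶜ = μ := vol_add_vol_compl G T1
  have hvolTnn : 0 ≤ vol G T := vol_nonneg G T
  have hvolT1nn : 0 ≤ vol G T1 := vol_nonneg G T1
  have hvolA2nn : 0 ≤ vol G A2 := vol_nonneg G A2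
  -- final arithmetic
  rw [cond, ← hCdef, ← hWdef, le_div_iff₀ hWpos, div_mul_eq_mul_div,
    div_le_iff₀ (by positivity : (0:ℝ) < 6 * q)]
  by_cases hcase1 : vol G T ≤ μ / 2
  · -- small T: use expansion of T
    have hexp : φ * vol G T ≤ eB G T Tᶜ := expansion_bound G hdeg hcond f6 hcase1
    have g1 : φ * W ≤ φ * (↑q * vol G T) := mul_le_mul_of_nonneg_left f2 hφ.le
    have g2 : φ * vol G T ≤ C := le_trans hexp f5
    have g3 : (q:ℝ) * (φ * vol G T) ≤ ↑q * C := mul_le_mul_of_nonneg_left g2 hq0.le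
    have g4 : ρ * (φ * W) ≤ 1 * (φ * W) :=
      mul_le_mul_of_nonneg_right hρ1 (mul_nonneg hφ.le hWpos.le)
    have g5 : (q:ℝ) * C ≤ 6 * ↑q * C := by nlinarith
    linarith
  · by_cases hcase2 : vol G T ≤ (1 - ρ / 8) * μ
    · -- medium T: use expansion of Tᶜ
      have hTc : vol G Tᶜ ≤ μ / 2 := by linarith
      have hTcvol : ρ / 8 * μ ≤ vol G Tᶜ := by linarith
      have hTcne : Tᶜ.Nonempty := by
        rw [Set.nonempty_iff_ne_empty]
        intro h
        have : vol G Tᶜ = 0 := by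
          rw [vol_eq_sum_ite]
          refine Finset.sum_eq_zero fun u _ => ?_
          rw [if_neg (show ¬ u ∈ Tᶜ by rw [h]; exact Set.notMem_empty u)]
        nlinarith
      have hexp : φ * vol G Tᶜ ≤ eB G Tᶜ Tᶜᶜ := expansion_bound G hdeg hcond hTcne hTc
      rw [compl_compl] at hexp
      have hsymm : eB G Tᶜ T = eB G T Tᶜ := eB_symm G Tᶜ T
      rw [hsymm] at hexp
      have e1 : φ * vol G Tᶜ ≤ C := le_trans hexp f5
      have e2 : ρ * φ * W ≤ ρ * φ * μ :=
        mul_le_mul_of_nonneg_left hWle (by positivity)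
      have e3 : φ * (ρ / 8 * μ) ≤ φ * vol G Tᶜ := mul_le_mul_of_nonneg_left hTcvol hφ.le
      have e4 : 8 * C ≤ 6 * ↑q * C := by
        have := mul_nonneg (show (0:ℝ) ≤ 6 * ↑q - 8 by linarith) hCnn
        linarith
      linarith
    · -- large T: use ULC soundness
      push_neg at hcase2
      have hT1big : 2 * vol G T - W ≤ vol G T1 := by linarith
      have hT1c : vol G T1ᶜ ≤ ρ / 4 * μ := by linarith
      have hCbig : ρ * μ / 2 ≤ C := by linarith
      have g1 : φ * (ρ * W) ≤ 1 * (ρ * W) :=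
        mul_le_mul_of_nonneg_right hφ1 (mul_nonneg hρ0.le hWpos.le)
      have g2 : ρ * W ≤ ρ * μ := mul_le_mul_of_nonneg_left hWle hρ0.le
      have g3 : 2 * C ≤ 6 * ↑q * C := by
        have := mul_nonneg (show (0:ℝ) ≤ 6 * ↑q - 2 by linarith) hCnn
        linarith
      linarith

end Sublinear
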